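/- Let G be a finite simple graph with n vertices and m ≥ 1 edges. Then, as real numbers, NK(G^{+--}) ≤ m^n · ((m+n-1) - M1(G)/m)^m; moreover, equality holds if G is regular. -/

import Mathlib

open Finset

variable {V : Type*}

/-- The Narumi–Katayama index: the product of the degrees of all vertices. -/
def NK {W : Type*} [Fintype W] (H : SimpleGraph W) [DecidableRel H.Adj] : ℕ :=
  ∏ v, H.degree v

/-- The first Zagreb index: the sum of the squares of the degrees. -/
def M1 [Fintype V] (G : SimpleGraph V) [DecidableRel G.Adj] : ℕ :=
  ∑ v, (G.degree v) ^ 2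

/-- The multiplicative sum Zagreb index: the product over the edges of `G` of the
sum of the degrees of the two endpoints. -/
def Pi1Star [Fintype V] [DecidableEq V] (G : SimpleGraph V) [DecidableRel G.Adj] : ℕ :=
  ∏ e ∈ G.edgeFinset,
    Sym2.lift ⟨fun u v => G.degree u + G.degree v, fun u v => by simp [Nat.add_comm]⟩ e

/-- A generic transformation graph on the vertex set `V(G) ∪ E(G)`, built from a
symmetric irreflexive relation `Rvv` between vertices, a symmetric irreflexive relation
`Ree` between edges, and an incidence relation `Rve` between vertices and edges. -/
def transGraph (G : SimpleGraph V) (Rvv : V → V → Prop) (Ree : Sym2 V → Sym2 V → Prop)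
    (Rve : V → Sym2 V → Prop)
    (hvv : Symmetric Rvv) (hvv' : Irreflexive Rvv)
    (hee : Symmetric Ree) (hee' : Irreflexive Ree) :
    SimpleGraph (V ⊕ G.edgeSet) where
  Adj a b :=
    match a, b with
    | Sum.inl u, Sum.inl v => Rvv u v
    | Sum.inr e, Sum.inr f => Ree e.1 f.1
    | Sum.inl u, Sum.inr e => Rve u e.1
    | Sum.inr e, Sum.inl u => Rve u e.1
  symm := by
    constructor
    rintro (u | e) (v | f) h
    · exact hvv h
    · exact h
    · exact h
    · exact hee h
  loopless := by
    constructor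
    rintro (u | e) h
    · exact hvv' u h
    · exact hee' e.1 h

instance transGraph.instDecidableAdj (G : SimpleGraph V) (Rvv : V → V → Prop)
    (Ree : Sym2 V → Sym2 V → Prop) (Rve : V → Sym2 V → Prop)
    (h1 : Symmetric Rvv) (h2 : Irreflexive Rvv) (h3 : Symmetric Ree) (h4 : Irreflexive Ree)
    [DecidableRel Rvv] [DecidableRel Ree] [∀ u e, Decidable (Rve u e)] :
    DecidableRel (transGraph G Rvv Ree Rve h1 h2 h3 h4).Adj := fun a b =>
  match a, b with
  | Sum.inl u, Sum.inl v => inferInstanceAs (Decidable (Rvv u v))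
  | Sum.inr e, Sum.inr f => inferInstanceAs (Decidable (Ree e.1 f.1))
  | Sum.inl u, Sum.inr e => inferInstanceAs (Decidable (Rve u e.1))
  | Sum.inr e, Sum.inl u => inferInstanceAs (Decidable (Rve u e.1))

/-- Two edges (as elements of `Sym2 V`) are adjacent: distinct and sharing an endpoint. -/
abbrev shareRel : Sym2 V → Sym2 V → Prop := fun e f => e ≠ f ∧ ∃ w, w ∈ e ∧ w ∈ f

lemma shareRel_symm : Symmetric (shareRel (V := V)) :=
  fun _ _ h => ⟨h.1.symm, h.2.imp fun _ hw => ⟨hw.2, hw.1⟩⟩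

lemma shareRel_irrefl : Irreflexive (shareRel (V := V)) := fun _ h => h.1 rfl

/-- Two edges are "non-adjacent": distinct and sharing no endpoint. -/
abbrev coshareRel : Sym2 V → Sym2 V → Prop := fun e f => e ≠ f ∧ ∀ w, w ∈ e → w ∉ f

lemma coshareRel_symm : Symmetric (coshareRel (V := V)) :=
  fun _ _ h => ⟨h.1.symm, fun w hf he => h.2 w he hf⟩

lemma coshareRel_irrefl : Irreflexive (coshareRel (V := V)) := fun _ h => h.1 rfl

/-- Non-adjacency of distinct vertices. -/
abbrev coAdj (G : SimpleGraph V) : V → V → Prop := fun u v => u ≠ v ∧ ¬ G.Adj u v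

lemma coAdj_symm (G : SimpleGraph V) : Symmetric (coAdj G) :=
  fun _ _ h => ⟨h.1.symm, fun ha => h.2 ha.symm⟩

lemma coAdj_irrefl (G : SimpleGraph V) : Irreflexive (coAdj G) := fun _ h => h.1 rfl

variable [Fintype V] [DecidableEq V]

/-- The total transformation graph `G^{+--}`. -/
abbrev Gpmm (G : SimpleGraph V) [DecidableRel G.Adj] : SimpleGraph (V ⊕ G.edgeSet) :=
  transGraph G G.Adj coshareRel (fun u e => u ∉ e)
    (@id (Symmetric G.Adj) fun _ _ h => G.adj_symm h) (@id (Irreflexive G.Adj) fun _ h => G.irrefl h)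
    coshareRel_symm coshareRel_irrefl


section MyAux

lemma my_amgm {ι : Type*} (s : Finset ι) (hs : s.Nonempty) (z : ι → ℝ)
    (hz : ∀ i ∈ s, 0 ≤ z i) :
    ∏ i ∈ s, z i ≤ ((∑ i ∈ s, z i) / s.card) ^ s.card := by
  have hm : (0:ℝ) < s.card := by exact_mod_cast hs.card_pos
  have h := Real.geom_mean_le_arith_mean_weighted s (fun _ => (s.card : ℝ)⁻¹) z
      (fun i _ => by positivity)
      (by rw [Finset.sum_const, nsmul_eq_mul]; field_simp) hz
  beta_reduce at h
  rw [Real.finset_prod_rpow s z hz] at h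
  have hsum : ∑ i ∈ s, (s.card : ℝ)⁻¹ * z i = (∑ i ∈ s, z i) / s.card := by
    rw [← Finset.mul_sum]; ring
  rw [hsum] at h
  have h2 := Real.rpow_le_rpow (Real.rpow_nonneg (Finset.prod_nonneg hz) _) h hm.le
  rw [← Real.rpow_mul (Finset.prod_nonneg hz), inv_mul_cancel₀ hm.ne', Real.rpow_one,
    Real.rpow_natCast] at h2
  exact h2

lemma my_card_filter_sum {α β : Type*} [Fintype α] [Fintype β] (p : α ⊕ β → Prop)
    [DecidablePred p] :
    (univ.filter p).card
      = (univ.filter (fun a => p (Sum.inl a))).card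
        + (univ.filter (fun b => p (Sum.inr b))).card := by
  rw [← Fintype.card_subtype, ← Fintype.card_subtype, ← Fintype.card_subtype,
    Fintype.card_congr (Equiv.subtypeSum (p := p)), Fintype.card_sum]

lemma my_degree_as_filter {W : Type*} [Fintype W] (H : SimpleGraph W) [DecidableRel H.Adj]
    (v : W) : H.degree v = (univ.filter (H.Adj v)).card := by
  rw [← SimpleGraph.card_neighborFinset_eq_degree, SimpleGraph.neighborFinset_eq_filter]

section Graphs

variable [Fintype V] [DecidableEq V]

lemma my_card_filter_edge (G : SimpleGraph V) [DecidableRel G.Adj] (q : Sym2 V → Prop)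
    [DecidablePred q] :
    (univ.filter (fun e : G.edgeSet => q e.1)).card = (G.edgeFinset.filter q).card := by
  apply Finset.card_bij (fun e _ => e.1)
  · intro e he
    simp only [mem_filter, mem_univ, true_and] at he ⊢
    exact ⟨SimpleGraph.mem_edgeFinset.2 e.2, he⟩
  · intro e₁ h₁ e₂ h₂ h
    exact Subtype.ext h
  · intro x hx
    simp only [mem_filter, SimpleGraph.mem_edgeFinset] at hx
    exact ⟨⟨x, hx.1⟩, by simp [hx.2], rfl⟩

/-- The degree-sum of the endpoints of an edge. -/
def Se (G : SimpleGraph V) [DecidableRel G.Adj] : Sym2 V → ℕ :=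
  Sym2.lift ⟨fun u v => G.degree u + G.degree v, fun u v => by simp [Nat.add_comm]⟩

lemma degree_inl (G : SimpleGraph V) [DecidableRel G.Adj] (u : V) :
    (Gpmm G).degree (Sum.inl u) = G.edgeFinset.card := by
  rw [my_degree_as_filter, my_card_filter_sum]
  have h1 : (univ.filter (fun a => (Gpmm G).Adj (Sum.inl u) (Sum.inl a)))
      = univ.filter (G.Adj u) := by
    ext a; simp only [mem_filter]; exact Iff.rfl
  have h2a : (univ.filter (fun e : G.edgeSet => (Gpmm G).Adj (Sum.inl u) (Sum.inr e)))
      = univ.filter (fun e : G.edgeSet => u ∉ e.1) := by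
    ext e; simp only [mem_filter]; exact Iff.rfl
  have h2 : (univ.filter (fun e : G.edgeSet => (Gpmm G).Adj (Sum.inl u) (Sum.inr e))).card
      = (G.edgeFinset.filter (fun x => u ∉ x)).card := by
    rw [h2a]; exact my_card_filter_edge G (fun x => u ∉ x)
  rw [h1, h2, ← my_degree_as_filter]
  have h3 : (G.edgeFinset.filter (fun x => u ∈ x)).card
      + (G.edgeFinset.filter (fun x => ¬ u ∈ x)).card = G.edgeFinset.card :=
    Finset.card_filter_add_card_filter_not _
  have h4 : (G.edgeFinset.filter (fun x => u ∈ x)).card = G.degree u := by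
    rw [← SimpleGraph.card_incidenceFinset_eq_degree, SimpleGraph.incidenceFinset_eq_filter]
  omega

lemma degree_inr (G : SimpleGraph V) [DecidableRel G.Adj] (a b : V)
    (he : s(a, b) ∈ G.edgeSet) :
    (Gpmm G).degree (Sum.inr ⟨s(a, b), he⟩) + (G.degree a + G.degree b) + 1
      = G.edgeFinset.card + Fintype.card V := by
  have hab : G.Adj a b := he
  rw [my_degree_as_filter, my_card_filter_sum]
  -- vertex part
  have h1 : (univ.filter (fun w : V => (Gpmm G).Adj (Sum.inr ⟨s(a,b), he⟩) (Sum.inl w)))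
      = univ.filter (fun w => w ∉ (s(a, b) : Sym2 V)) := by
    ext w; simp only [mem_filter]; exact Iff.rfl
  have h2 : (univ.filter (fun w : V => w ∈ (s(a, b) : Sym2 V))) = {a, b} := by
    ext w; simp [Sym2.mem_iff]
  have h2' : (univ.filter (fun w : V => w ∈ (s(a, b) : Sym2 V))).card = 2 := by
    rw [h2, Finset.card_insert_of_notMem (by simp [hab.ne]), Finset.card_singleton]
  have h3 : (univ.filter (fun w : V => w ∈ (s(a, b) : Sym2 V))).card
      + (univ.filter (fun w : V => ¬ w ∈ (s(a, b) : Sym2 V))).card = Fintype.card V := by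
    rw [Finset.card_filter_add_card_filter_not, Finset.card_univ]
  -- edge part
  have h4a : (univ.filter (fun f : G.edgeSet => (Gpmm G).Adj (Sum.inr ⟨s(a,b), he⟩) (Sum.inr f)))
      = univ.filter (fun f : G.edgeSet => coshareRel (s(a, b)) f.1) := by
    ext f; simp only [mem_filter]; exact Iff.rfl
  have h4 : (univ.filter (fun f : G.edgeSet => (Gpmm G).Adj (Sum.inr ⟨s(a,b), he⟩) (Sum.inr f))).card
      = (G.edgeFinset.filter (fun f => coshareRel (s(a, b)) f)).card := by
    rw [h4a]; exact my_card_filter_edge G (fun f => coshareRel (s(a, b)) f)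
  have h5 : G.edgeFinset.filter (fun f => coshareRel (s(a, b)) f)
      = G.edgeFinset.filter (fun f => ¬ (a ∈ f ∨ b ∈ f)) := by
    apply Finset.filter_congr
    intro f hf
    constructor
    · rintro ⟨hne, hsh⟩
      push_neg
      exact ⟨hsh a (by simp), hsh b (by simp)⟩
    · intro hn
      push_neg at hn
      refine ⟨fun hcontra => hn.1 ?_, fun w hw => ?_⟩
      · rw [← hcontra]; simp
      · rw [Sym2.mem_iff] at hw
        rcases hw with rfl | rfl
        · exact hn.1
        · exact hn.2
  have h6 : G.edgeFinset.filter (fun f => a ∈ f ∨ b ∈ f)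
      = G.incidenceFinset a ∪ G.incidenceFinset b := by
    ext f
    simp only [SimpleGraph.incidenceFinset_eq_filter, Finset.mem_union, Finset.mem_filter]
    tauto
  have h7 : G.incidenceFinset a ∩ G.incidenceFinset b = {s(a, b)} := by
    ext f
    simp only [Finset.mem_inter, SimpleGraph.incidenceFinset_eq_filter, Finset.mem_filter,
      Finset.mem_singleton]
    constructor
    · rintro ⟨⟨hfe, haf⟩, ⟨-, hbf⟩⟩
      exact ((Sym2.mem_and_mem_iff hab.ne).1 ⟨haf, hbf⟩).symm ▸ rfl
    · rintro rfl
      exact ⟨⟨SimpleGraph.mem_edgeFinset.2 he, by simp⟩, ⟨SimpleGraph.mem_edgeFinset.2 he, by simp⟩⟩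
  have h8 := Finset.card_union_add_card_inter (G.incidenceFinset a) (G.incidenceFinset b)
  rw [h7, Finset.card_singleton, SimpleGraph.card_incidenceFinset_eq_degree,
    SimpleGraph.card_incidenceFinset_eq_degree] at h8
  have h9 : (G.edgeFinset.filter (fun f => a ∈ f ∨ b ∈ f)).card
      + (G.edgeFinset.filter (fun f => ¬ (a ∈ f ∨ b ∈ f))).card = G.edgeFinset.card :=
    Finset.card_filter_add_card_filter_not _
  rw [h1, h4, h5]
  rw [h6] at h9
  omega

lemma sum_Se (G : SimpleGraph V) [DecidableRel G.Adj] :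
    ∑ e ∈ G.edgeFinset, Se G e = M1 G := by
  have step1 : ∀ e ∈ G.edgeFinset, Se G e = ∑ v, (if v ∈ e then G.degree v else 0) := by
    intro e he
    rw [SimpleGraph.mem_edgeFinset] at he
    revert he
    refine Sym2.inductionOn e (fun a b hab => ?_)
    have hne : a ≠ b := (G.ne_of_adj hab)
    rw [Se, Sym2.lift_mk, ← Finset.sum_filter]
    have : (univ.filter (fun v : V => v ∈ (s(a, b) : Sym2 V))) = {a, b} := by
      ext w; simp [Sym2.mem_iff]
    rw [this, Finset.sum_pair hne]
  rw [Finset.sum_congr rfl step1, Finset.sum_comm, M1]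
  refine Finset.sum_congr rfl fun v _ => ?_
  rw [← Finset.sum_filter, ← SimpleGraph.incidenceFinset_eq_filter, Finset.sum_const,
    SimpleGraph.card_incidenceFinset_eq_degree, smul_eq_mul, sq]

end Graphs

end MyAux

theorem stmt_14 (G : SimpleGraph V) [DecidableRel G.Adj]
    (hm : 1 ≤ G.edgeFinset.card) :
    (NK (Gpmm G) : ℝ) ≤ (G.edgeFinset.card : ℝ) ^ Fintype.card V * (((G.edgeFinset.card : ℝ) + Fintype.card V - 1) - (M1 G : ℝ) / G.edgeFinset.card) ^ G.edgeFinset.card ∧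
      ((∃ r, G.IsRegularOfDegree r) → (NK (Gpmm G) : ℝ) = (G.edgeFinset.card : ℝ) ^ Fintype.card V * (((G.edgeFinset.card : ℝ) + Fintype.card V - 1) - (M1 G : ℝ) / G.edgeFinset.card) ^ G.edgeFinset.card) := by
  classical
  set m := G.edgeFinset.card with hmdef
  set n := Fintype.card V with hndef
  have hcard : (univ : Finset G.edgeSet).card = m := by
    rw [Finset.card_univ, hmdef, SimpleGraph.edgeFinset, Set.toFinset_card]
  set z : G.edgeSet → ℕ := fun e => (Gpmm G).degree (Sum.inr e) with hzdef
  have hF2 : ∀ e : G.edgeSet, z e + Se G e.1 + 1 = m + n := by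
    rintro ⟨e, he⟩
    revert he
    refine Sym2.inductionOn e (fun a b he => ?_)
    have h := degree_inr G a b he
    have hSe : Se G (s(a, b) : Sym2 V) = G.degree a + G.degree b := by
      rw [Se, Sym2.lift_mk]
    simp only [hzdef, hSe]
    omega
  have hF3 : ∑ e : G.edgeSet, Se G e.1 = M1 G := by
    rw [← sum_Se G]
    exact Finset.sum_set_coe (f := Se G) (s := G.edgeSet)
  have hNK : NK (Gpmm G) = m ^ n * ∏ e : G.edgeSet, z e := by
    rw [NK, Fintype.prod_sum_type]
    congr 1
    rw [Finset.prod_congr rfl (fun u _ => degree_inl G u), Finset.prod_const, Finset.card_univ]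
  have hsum : (∑ e : G.edgeSet, z e) + M1 G + m = (m + n) * m := by
    have h := Finset.sum_congr rfl (fun (e : G.edgeSet) (_ : e ∈ univ) => hF2 e)
    rw [Finset.sum_add_distrib, Finset.sum_add_distrib, Finset.sum_const, Finset.sum_const,
      hcard, smul_eq_mul, smul_eq_mul, mul_one] at h
    rw [← hF3]
    rw [mul_comm] at h
    omega
  have hm0 : (0:ℝ) < m := by exact_mod_cast hm
  have hcast : (∑ e : G.edgeSet, (z e : ℝ)) + (M1 G : ℝ) + m = ((m : ℝ) + n) * m := by
    exact_mod_cast hsum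
  have hB : ((m : ℝ) + n - 1) - (M1 G : ℝ) / m = (∑ e : G.edgeSet, (z e : ℝ)) / m := by
    field_simp
    linarith [hcast]
  have hne : (univ : Finset G.edgeSet).Nonempty := by
    rw [← Finset.card_pos, hcard]; omega
  have hNKcast : (NK (Gpmm G) : ℝ) = (m : ℝ) ^ n * ∏ e : G.edgeSet, (z e : ℝ) := by
    rw [hNK]; push_cast; ring
  constructor
  · have hamgm := my_amgm (univ : Finset G.edgeSet) hne (fun e => (z e : ℝ))
      (fun i _ => by positivity)
    rw [hcard] at hamgm
    rw [hNKcast, hB]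
    exact mul_le_mul_of_nonneg_left hamgm (by positivity)
  · rintro ⟨r, hr⟩
    have hSe2 : ∀ x : Sym2 V, Se G x = r + r := fun x =>
      Sym2.inductionOn x (fun a b => by rw [Se, Sym2.lift_mk]; show G.degree a + G.degree b = r + r; rw [hr a, hr b])
    obtain ⟨e0, -⟩ := hne
    have hzc : ∀ e : G.edgeSet, z e = z e0 := by
      intro e
      have h1 := hF2 e
      have h2 := hF2 e0
      rw [hSe2] at h1 h2
      omega
    have hprodeq : ∏ e : G.edgeSet, (z e : ℝ) = ((z e0 : ℝ)) ^ m := by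
      rw [Finset.prod_congr rfl (fun e _ => by rw [hzc e]), Finset.prod_const, hcard]
    have hsumeq : ∑ e : G.edgeSet, (z e : ℝ) = m * (z e0 : ℝ) := by
      rw [Finset.sum_congr rfl (fun e _ => by rw [hzc e]), Finset.sum_const, hcard,
        nsmul_eq_mul]
    have hBeq : ((m : ℝ) + n - 1) - (M1 G : ℝ) / m = (z e0 : ℝ) := by
      rw [hB, hsumeq, mul_comm, mul_div_assoc, div_self hm0.ne', mul_one]
    rw [hNKcast, hprodeq, hBeq]
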